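/- (Society behaves like a single individual) Let A be a real symmetric n×n matrix, ε ∈ (0,1], and p ∈ ℝⁿ a unit vector with A·p = p such that ‖A·y‖₂ ≤ (1−ε)·‖y‖₂ for every y orthogonal to p. Fix an item i with base-utility vector vᵢ ∈ ℝⁿ and boredom-coefficient vector αᵢ ∈ ℝⁿ with nonnegative entries, let r ∈ (0,1), and let x : ℕ → Fin m be the society's selection sequence. Define per-person memories by Mᵢⱼ(0) = 0 and Mᵢⱼ(t+1) = (1−r)·Mᵢⱼ(t) + r·(if x t = i then 1 else 0), the boredom vector bᵢ(t) ∈ ℝⁿ by (bᵢ(t))ⱼ = (αᵢ)ⱼ·Mᵢⱼ(t), and the utility vectors by uᵢ(0) = vᵢ and uᵢ(t+1) = A·uᵢ(t) − (bᵢ(t+1) − bᵢ(t)). Then with 𝟙 the all-ones vector and c = ⟪p, 𝟙⟫·p, for every t ≥ 0: |𝟙ᵀuᵢ(t) − (cᵀvᵢ − cᵀbᵢ(t))| ≤ √n·((1−ε)ᵗ·‖vᵢ‖₂ + (r/ε)·‖αᵢ‖₂). In particular, the per-person welfare Wᵢ(t)/n = 𝟙ᵀuᵢ(t)/n differs from the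 utility ũᵢ(t) = (cᵀvᵢ − cᵀbᵢ(t))/n of a single individual with base utility cᵀvᵢ/n and boredom vector cᵀbᵢ(t)/n by at most (1−ε)ᵗ·‖vᵢ‖₂/√n + (r/ε)·‖αᵢ‖₂/√n. -/

import Mathlib

/-- The Euclidean inner product of two vectors in `Fin n → ℝ`. -/
def dotp {n : ℕ} (y z : Fin n → ℝ) : ℝ := ∑ j : Fin n, y j * z j

/-- The Euclidean (ℓ²) norm of a vector in `Fin n → ℝ`. -/
noncomputable def norm2 {n : ℕ} (y : Fin n → ℝ) : ℝ := Real.sqrt (∑ j : Fin n, y j ^ 2)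

section aux
variable {n : ℕ}

lemma dotp_comm' (y z : Fin n → ℝ) : dotp y z = dotp z y := by
  simp [dotp, mul_comm]

lemma dotp_sub_right' (y z w : Fin n → ℝ) : dotp y (z - w) = dotp y z - dotp y w := by
  simp [dotp, mul_sub, Finset.sum_sub_distrib]

lemma dotp_smul_left' (c : ℝ) (y z : Fin n → ℝ) : dotp (c • y) z = c * dotp y z := by
  simp [dotp, Finset.mul_sum, mul_assoc]

lemma norm2_eq_sqrt_dotp (y : Fin n → ℝ) : norm2 y = Real.sqrt (dotp y y) := by
  simp [norm2, dotp, sq]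

lemma dotp_self_nonneg (y : Fin n → ℝ) : 0 ≤ dotp y y :=
  Finset.sum_nonneg fun j _ => mul_self_nonneg _

lemma norm2_nonneg' (y : Fin n → ℝ) : 0 ≤ norm2 y := Real.sqrt_nonneg _

lemma dotp_le_norm (y z : Fin n → ℝ) : dotp y z ≤ norm2 y * norm2 z := by
  simpa [dotp, norm2] using Real.sum_mul_le_sqrt_mul_sqrt Finset.univ y z

lemma abs_dotp_le' (y z : Fin n → ℝ) : |dotp y z| ≤ norm2 y * norm2 z := by
  rw [abs_le]
  constructor
  · have h := dotp_le_norm y (-z)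
    have h2 : dotp y (-z) = - dotp y z := by simp [dotp]
    have h3 : norm2 (-z) = norm2 z := by simp [norm2]
    rw [h2, h3] at h; linarith
  · exact dotp_le_norm y z

lemma dotp_mulVec_comm' (A : Matrix (Fin n) (Fin n) ℝ) (hA : A.IsSymm) (y z : Fin n → ℝ) :
    dotp (A.mulVec y) z = dotp y (A.mulVec z) := by
  simp only [dotp, Matrix.mulVec, dotProduct, Finset.sum_mul, Finset.mul_sum]
  rw [Finset.sum_comm]
  refine Finset.sum_congr rfl fun k _ => Finset.sum_congr rfl fun j _ => ?_
  have : A j k = A k j := by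
    conv_lhs => rw [← hA]
    rfl
  rw [this]; ring

lemma norm2_le_of_abs_le {c : ℝ} (hc : 0 ≤ c) (w z : Fin n → ℝ)
    (h : ∀ j, |w j| ≤ c * |z j|) : norm2 w ≤ c * norm2 z := by
  have hsum : (∑ j : Fin n, w j ^ 2) ≤ c ^ 2 * ∑ j : Fin n, z j ^ 2 := by
    rw [Finset.mul_sum]
    refine Finset.sum_le_sum fun j _ => ?_
    have := h j
    have h1 : w j ^ 2 = |w j| ^ 2 := (sq_abs _).symm
    have h2 : c ^ 2 * z j ^ 2 = (c * |z j|) ^ 2 := by rw [mul_pow, sq_abs]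
    rw [h1, h2]
    exact pow_le_pow_left₀ (abs_nonneg _) this 2
  calc norm2 w ≤ Real.sqrt (c ^ 2 * ∑ j : Fin n, z j ^ 2) := Real.sqrt_le_sqrt hsum
    _ = c * norm2 z := by
        rw [Real.sqrt_mul (sq_nonneg c), Real.sqrt_sq hc, norm2]


lemma dotp_smul_right' {n : ℕ} (c : ℝ) (y z : Fin n → ℝ) : dotp y (c • z) = c * dotp y z := by
  simp [dotp, Finset.mul_sum]; ring_nf
  exact Finset.sum_congr rfl fun j _ => by ring

lemma dotp_add_left' {n : ℕ} (y z w : Fin n → ℝ) : dotp (y + z) w = dotp y w + dotp z w := by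
  simp [dotp, add_mul, Finset.sum_add_distrib]

end aux
/-- (Society behaves like a single individual) Let `A` be a symmetric influence matrix
with unit top eigenvector `p` (`A·p = p`) contracting the orthogonal complement of `p` by
the factor `1−ε`. For a fixed item `i` with base-utility vector `vᵢ` and nonnegative
boredom-coefficient vector `αᵢ`, per-person memories `Mᵢⱼ` evolving by decay rate `r` and
the society's selection sequence `x`, boredom `bᵢ(t)ⱼ = (αᵢ)ⱼ·Mᵢⱼ(t)`, and utilities
`uᵢ(0) = vᵢ`, `uᵢ(t+1) = A·uᵢ(t) − (bᵢ(t+1) − bᵢ(t))`, we have with `c = ⟪p,𝟙⟫·p`: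
`|𝟙ᵀuᵢ(t) − (cᵀvᵢ − cᵀbᵢ(t))| ≤ √n·((1−ε)ᵗ·‖vᵢ‖₂ + (r/ε)·‖αᵢ‖₂)`; in particular the
per-person welfare `𝟙ᵀuᵢ(t)/n` differs from the single-individual utility
`(cᵀvᵢ − cᵀbᵢ(t))/n` by at most `(1−ε)ᵗ·‖vᵢ‖₂/√n + (r/ε)·‖αᵢ‖₂/√n`. -/
theorem society_as_individual (n m : ℕ) (hn : 0 < n)
    (A : Matrix (Fin n) (Fin n) ℝ) (hA : A.IsSymm)
    (ε : ℝ) (hε0 : 0 < ε) (hε1 : ε ≤ 1)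
    (p : Fin n → ℝ) (hp : norm2 p = 1) (hAp : A.mulVec p = p)
    (hcontract : ∀ y : Fin n → ℝ, dotp p y = 0 →
      norm2 (A.mulVec y) ≤ (1 - ε) * norm2 y)
    (i : Fin m) (vi αi : Fin n → ℝ) (hαi : ∀ j, 0 ≤ αi j)
    (r : ℝ) (hr0 : 0 < r) (hr1 : r < 1)
    (x : ℕ → Fin m)
    (Mem : Fin n → ℕ → ℝ) (hM0 : ∀ j, Mem j 0 = 0)
    (hMstep : ∀ j t, Mem j (t + 1) = (1 - r) * Mem j t + r * (if x t = i then 1 else 0))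
    (u : ℕ → Fin n → ℝ) (hu0 : u 0 = vi)
    (hustep : ∀ t, u (t + 1) =
      A.mulVec (u t) - ((fun j => αi j * Mem j (t + 1)) - (fun j => αi j * Mem j t)))
    (t : ℕ) :
    |(∑ j : Fin n, u t j) -
        (dotp (dotp p (fun _ => 1) • p) vi -
          dotp (dotp p (fun _ => 1) • p) (fun j => αi j * Mem j t))| ≤
      Real.sqrt n * ((1 - ε) ^ t * norm2 vi + (r / ε) * norm2 αi) ∧
    |(∑ j : Fin n, u t j) / n -
        (dotp (dotp p (fun _ => 1) • p) vi -
          dotp (dotp p (fun _ => 1) • p) (fun j => αi j * Mem j t)) / n| ≤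
      (1 - ε) ^ t * norm2 vi / Real.sqrt n + (r / ε) * norm2 αi / Real.sqrt n := by
  have hε1' : (0:ℝ) ≤ 1 - ε := by linarith
  have hpp : dotp p p = 1 := by
    have h1 : Real.sqrt (dotp p p) = 1 := by rw [← norm2_eq_sqrt_dotp]; exact hp
    have h0 := dotp_self_nonneg p
    nlinarith [Real.sq_sqrt h0]
  -- memory bounds
  have hMem : ∀ t j, 0 ≤ Mem j t ∧ Mem j t ≤ 1 := by
    intro t
    induction t with
    | zero => intro j; simp [hM0]
    | succ t ih =>
      intro j
      rcases ih j with ⟨h0, h1⟩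
      rw [hMstep]
      by_cases hx : x t = i <;> simp [hx] <;> constructor <;> nlinarith
  have hΔb : ∀ t, norm2 ((fun j => αi j * Mem j (t + 1)) - fun j => αi j * Mem j t)
      ≤ r * norm2 αi := by
    intro t
    apply norm2_le_of_abs_le (le_of_lt hr0)
    intro j
    have hd : ((fun j => αi j * Mem j (t + 1)) - fun j => αi j * Mem j t) j
        = αi j * (Mem j (t + 1) - Mem j t) := by simp [mul_sub]
    have hdm : |Mem j (t + 1) - Mem j t| ≤ r := by
      rcases hMem t j with ⟨h0, h1⟩
      rw [hMstep, abs_le]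
      by_cases hx : x t = i <;> simp [hx] <;> constructor <;> nlinarith
    rw [hd, abs_mul, mul_comm]
    exact mul_le_mul_of_nonneg_right (by simpa using hdm) (abs_nonneg _)
  -- eigenvector facts
  have hAinv : ∀ z : Fin n → ℝ, dotp p (A.mulVec z) = dotp p z := by
    intro z
    rw [dotp_comm', dotp_mulVec_comm' A hA, hAp, dotp_comm']
  have horth : ∀ y : Fin n → ℝ, dotp p y = 0 → dotp p (A.mulVec y) = 0 := by
    intro y hy; rw [hAinv]; exact hy
  have hpu : ∀ t, dotp p (u t) = dotp p vi - dotp p (fun j => αi j * Mem j t) := by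
    intro t
    induction t with
    | zero => rw [hu0]; simp [hM0, dotp]
    | succ t ih =>
      rw [hustep t, dotp_sub_right', dotp_sub_right', hAinv, ih]
      ring
  -- key contraction estimate
  have hkey : ∀ t, ∀ y : Fin n → ℝ, dotp p y = 0 →
      |dotp y (u t)| ≤ norm2 y * ((1 - ε) ^ t * norm2 vi + r / ε * norm2 αi) := by
    intro t
    induction t with
    | zero =>
      intro y hy
      rw [hu0]
      have h1 := abs_dotp_le' y vi
      have h2 := norm2_nonneg' y
      have h3 := norm2_nonneg' αi
      have h4 : 0 ≤ r / ε := by positivity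
      simp only [pow_zero, one_mul]
      nlinarith [mul_nonneg h2 (mul_nonneg h4 h3)]
    | succ t ih =>
      intro y hy
      have hy' : dotp p (A.mulVec y) = 0 := horth y hy
      have hsplit : dotp y (u (t + 1)) = dotp (A.mulVec y) (u t)
          - dotp y ((fun j => αi j * Mem j (t + 1)) - fun j => αi j * Mem j t) := by
        rw [hustep t, dotp_sub_right', ← dotp_mulVec_comm' A hA]
      have hIH := ih (A.mulVec y) hy'
      have hAy := hcontract y hy
      have hB : 0 ≤ (1 - ε) ^ t * norm2 vi + r / ε * norm2 αi := by
        have := norm2_nonneg' vi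
        have := norm2_nonneg' αi
        positivity
      have hNy := norm2_nonneg' y
      have hΔ : |dotp y ((fun j => αi j * Mem j (t + 1)) - fun j => αi j * Mem j t)|
          ≤ norm2 y * (r * norm2 αi) := by
        calc |dotp y ((fun j => αi j * Mem j (t + 1)) - fun j => αi j * Mem j t)|
            ≤ norm2 y * norm2 ((fun j => αi j * Mem j (t + 1)) - fun j => αi j * Mem j t) :=
              abs_dotp_le' _ _
          _ ≤ norm2 y * (r * norm2 αi) := mul_le_mul_of_nonneg_left (hΔb t) hNy
      have h1 : |dotp (A.mulVec y) (u t)|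
          ≤ (1 - ε) * norm2 y * ((1 - ε) ^ t * norm2 vi + r / ε * norm2 αi) := by
        calc |dotp (A.mulVec y) (u t)|
            ≤ norm2 (A.mulVec y) * ((1 - ε) ^ t * norm2 vi + r / ε * norm2 αi) := hIH
          _ ≤ (1 - ε) * norm2 y * ((1 - ε) ^ t * norm2 vi + r / ε * norm2 αi) :=
              mul_le_mul_of_nonneg_right hAy hB
      have halg : (1 - ε) * norm2 y * ((1 - ε) ^ t * norm2 vi + r / ε * norm2 αi)
          + norm2 y * (r * norm2 αi)
          = norm2 y * ((1 - ε) ^ (t + 1) * norm2 vi + r / ε * norm2 αi) := by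
        field_simp
        ring
      rw [hsplit]
      calc |dotp (A.mulVec y) (u t)
            - dotp y ((fun j => αi j * Mem j (t + 1)) - fun j => αi j * Mem j t)|
          ≤ |dotp (A.mulVec y) (u t)|
            + |dotp y ((fun j => αi j * Mem j (t + 1)) - fun j => αi j * Mem j t)| :=
            abs_sub _ _
        _ ≤ (1 - ε) * norm2 y * ((1 - ε) ^ t * norm2 vi + r / ε * norm2 αi)
            + norm2 y * (r * norm2 αi) := add_le_add h1 hΔ
        _ = norm2 y * ((1 - ε) ^ (t + 1) * norm2 vi + r / ε * norm2 αi) := halg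
  -- the deviation vector q
  set one : Fin n → ℝ := fun _ => (1:ℝ) with honedef
  set cp : ℝ := dotp p one with hcpdef
  set q : Fin n → ℝ := one - cp • p with hqdef
  have hqorth : dotp p q = 0 := by
    rw [hqdef, dotp_sub_right', dotp_smul_right', hpp]
    ring
  have hone_one : dotp one one = (n : ℝ) := by simp [honedef, dotp]
  have hone_p : dotp one p = cp := by rw [dotp_comm']
  have hqq : dotp q q = (n : ℝ) - cp ^ 2 := by
    have h1 : dotp q q = dotp q one - dotp q (cp • p) := by
      rw [show dotp q q = dotp q (one - cp • p) from rfl, dotp_sub_right']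
    have h2 : dotp q (cp • p) = cp * dotp q p := dotp_smul_right' _ _ _
    have h3 : dotp q p = 0 := by rw [dotp_comm']; exact hqorth
    have h4 : dotp q one = (n : ℝ) - cp * cp := by
      rw [dotp_comm', show dotp one q
          = dotp one (one - cp • p) from rfl,
        dotp_sub_right', dotp_smul_right', hone_one, hone_p]
    rw [h1, h2, h3, h4]
    ring
  have hqn : norm2 q ≤ Real.sqrt n := by
    rw [norm2_eq_sqrt_dotp, hqq]
    apply Real.sqrt_le_sqrt
    nlinarith [sq_nonneg cp]
  -- error representation
  have herr : (∑ j : Fin n, u t j) -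
      (dotp (cp • p) vi - dotp (cp • p) (fun j => αi j * Mem j t)) = dotp q (u t) := by
    have hsum : (∑ j : Fin n, u t j) = dotp one (u t) := by simp [honedef, dotp]
    have hone : dotp one (u t) = dotp q (u t) + cp * dotp p (u t) := by
      have : one = q + cp • p := by
        rw [hqdef]; abel
      rw [this, dotp_add_left', dotp_smul_left']
    rw [hsum, hone, hpu t, dotp_smul_left', dotp_smul_left']
    ring
  have hB : 0 ≤ (1 - ε) ^ t * norm2 vi + r / ε * norm2 αi := by
    have := norm2_nonneg' vi
    have := norm2_nonneg' αi
    positivity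
  have hmain : |(∑ j : Fin n, u t j) -
      (dotp (cp • p) vi - dotp (cp • p) (fun j => αi j * Mem j t))| ≤
      Real.sqrt n * ((1 - ε) ^ t * norm2 vi + (r / ε) * norm2 αi) := by
    rw [herr]
    calc |dotp q (u t)| ≤ norm2 q * ((1 - ε) ^ t * norm2 vi + r / ε * norm2 αi) :=
          hkey t q hqorth
      _ ≤ Real.sqrt n * ((1 - ε) ^ t * norm2 vi + r / ε * norm2 αi) :=
          mul_le_mul_of_nonneg_right hqn hB
  refine ⟨hmain, ?_⟩
  have hnpos : (0:ℝ) < n := by exact_mod_cast hn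
  have hspos : 0 < Real.sqrt n := Real.sqrt_pos.2 hnpos
  have hns : Real.sqrt n * Real.sqrt n = (n : ℝ) := Real.mul_self_sqrt (by positivity)
  have hdiv : Real.sqrt n * ((1 - ε) ^ t * norm2 vi + (r / ε) * norm2 αi) / n
      = (1 - ε) ^ t * norm2 vi / Real.sqrt n + (r / ε) * norm2 αi / Real.sqrt n := by
    have key : ∀ z : ℝ, Real.sqrt n * z / n = z / Real.sqrt n := by
      intro z
      rw [eq_div_iff (ne_of_gt hspos), div_mul_eq_mul_div, mul_comm (Real.sqrt n) z,
        mul_assoc, hns, mul_div_assoc, div_self (ne_of_gt hnpos), mul_one]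
    rw [mul_add, add_div, key, key]
  calc |(∑ j : Fin n, u t j) / n -
        (dotp (cp • p) vi - dotp (cp • p) (fun j => αi j * Mem j t)) / n|
      = |(∑ j : Fin n, u t j) -
        (dotp (cp • p) vi - dotp (cp • p) (fun j => αi j * Mem j t))| / n := by
        rw [← sub_div, abs_div, abs_of_pos hnpos]
    _ ≤ Real.sqrt n * ((1 - ε) ^ t * norm2 vi + (r / ε) * norm2 αi) / n := by
        gcongr
    _ = _ := hdiv
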